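/- arXiv:1904.01368 — 2 statements merged into one kernel-verified Lean document; each statement's English description precedes it below -/
import Mathlib

section
/- Along any solution of the Cucker–Smale system ẋ = v, v̇ = −L(t,x)v with symmetric nonnegative weights, the velocity standard deviation V(t) = √B(v(t),v(t)) is non-increasing, and the position standard deviation X(t) = √B(x(t),x(t)) satisfies X(t) ≤ X(s) + (t−s) V(s) for all 0 ≤ s ≤ t (weak dissipation: Ẋ ≤ V, V̇ ≤ 0). -/
open Finset

noncomputable def Bvar {N d : ℕ} (x y : Fin N → EuclideanSpace ℝ (Fin d)) : ℝ :=
  (N : ℝ)⁻¹ * ∑ i, (inner ℝ (x i) (y i) : ℝ) -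
    (inner ℝ ((N : ℝ)⁻¹ • ∑ i, x i) ((N : ℝ)⁻¹ • ∑ i, y i) : ℝ)

noncomputable def lap {N d : ℕ} (a : Fin N → Fin N → ℝ)
    (y : Fin N → EuclideanSpace ℝ (Fin d)) : Fin N → EuclideanSpace ℝ (Fin d) :=
  fun i => (N : ℝ)⁻¹ • ∑ j, a i j • (y i - y j)

section Aux

open MeasureTheory intervalIntegral

lemma IntervalIntegrable.clm_comp' {E F : Type*} [NormedAddCommGroup E] [NormedSpace ℝ E]
    [NormedAddCommGroup F] [NormedSpace ℝ F] {f : ℝ → E} {a b : ℝ}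
    (L : E →L[ℝ] F) (hf : IntervalIntegrable f volume a b) :
    IntervalIntegrable (fun t => L (f t)) volume a b :=
  ⟨L.integrable_comp hf.1, L.integrable_comp hf.2⟩

variable {F : Type*} [NormedAddCommGroup F] [InnerProductSpace ℝ F] [CompleteSpace F]

lemma key_step (w b : ℝ → F)
    (hbint : ∀ u u' : ℝ, IntervalIntegrable b volume u u')
    (hw : ∀ u u' : ℝ, w u' - w u = -∫ r in u..u', b r)
    (hpos : ∀ r : ℝ, 0 ≤ (inner ℝ (w r) (b r) : ℝ))
    {u u' : ℝ} (huu : u ≤ u') :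
    ‖w u'‖ ^ 2 ≤ ‖w u‖ ^ 2 +
      3 * ((∫ r in (0:ℝ)..u', ‖b r‖) - ∫ r in (0:ℝ)..u, ‖b r‖) ^ 2 := by
  have hnint : ∀ c e : ℝ, IntervalIntegrable (fun r => ‖b r‖) volume c e :=
    fun c e => (hbint c e).norm
  set Δ : ℝ := (∫ r in (0:ℝ)..u', ‖b r‖) - ∫ r in (0:ℝ)..u, ‖b r‖ with hΔ
  have hΔeq : Δ = ∫ r in u..u', ‖b r‖ := by
    rw [hΔ, integral_interval_sub_left (hnint 0 u') (hnint 0 u)]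
  have hΔ0 : 0 ≤ Δ := by
    rw [hΔeq]; exact integral_nonneg huu (fun r _ => norm_nonneg _)
  have hwI : w u' = w u - ∫ r in u..u', b r := by
    have := hw u u'; rw [sub_eq_iff_eq_add] at this; rw [this]; abel
  have hnormdiff : ∀ r ∈ Set.Icc u u', ‖w u - w r‖ ≤ Δ := by
    intro r hr
    have h1 : w u - w r = ∫ ρ in u..r, b ρ := by
      have := hw u r; rw [sub_eq_iff_eq_add] at this
      rw [this]; abel
    rw [h1]
    calc ‖∫ ρ in u..r, b ρ‖ ≤ ∫ ρ in u..r, ‖b ρ‖ :=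
          norm_integral_le_integral_norm hr.1
      _ ≤ ∫ ρ in u..u', ‖b ρ‖ := by
          rw [← integral_add_adjacent_intervals (hnint u r) (hnint r u')]
          have : 0 ≤ ∫ ρ in r..u', ‖b ρ‖ := integral_nonneg hr.2 (fun _ _ => norm_nonneg _)
          linarith
      _ = Δ := hΔeq.symm
  have hinner : (inner ℝ (w u) (∫ r in u..u', b r) : ℝ) = ∫ r in u..u', (inner ℝ (w u) (b r) : ℝ) :=
    ((innerSL ℝ (w u)).intervalIntegral_comp_comm (hbint u u')).symm
  have hmono : (-Δ) * Δ ≤ ∫ r in u..u', (inner ℝ (w u) (b r) : ℝ) := by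
    have : ∫ r in u..u', (-Δ) * ‖b r‖ ≤ ∫ r in u..u', (inner ℝ (w u) (b r) : ℝ) := by
      apply integral_mono_on huu ((hnint u u').const_mul _)
        (IntervalIntegrable.clm_comp' (innerSL ℝ (w u)) (hbint u u'))
      intro r hr
      have h1 : (inner ℝ (w u) (b r) : ℝ) =
          (inner ℝ (w r) (b r) : ℝ) + (inner ℝ (w u - w r) (b r) : ℝ) := by
        rw [← inner_add_left, add_sub_cancel]
      have h2 : -(‖w u - w r‖ * ‖b r‖) ≤ (inner ℝ (w u - w r) (b r) : ℝ) := by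
        have := abs_real_inner_le_norm (w u - w r) (b r)
        cases' abs_le.mp this with h _; linarith
      have h3 := mul_le_mul_of_nonneg_right (hnormdiff r hr) (norm_nonneg (b r))
      have := hpos r
      simp only [innerSL_apply_apply]
      nlinarith
    rw [intervalIntegral.integral_const_mul] at this
    calc (-Δ) * Δ = (-Δ) * ∫ r in u..u', ‖b r‖ := by rw [hΔeq]
      _ ≤ _ := this
  have hInorm : ‖∫ r in u..u', b r‖ ≤ Δ := by
    rw [hΔeq]; exact norm_integral_le_integral_norm huu
  have expand : ‖w u'‖ ^ 2 = ‖w u‖ ^ 2 - 2 * (inner ℝ (w u) (∫ r in u..u', b r) : ℝ)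
      + ‖∫ r in u..u', b r‖ ^ 2 := by
    rw [hwI]; exact norm_sub_sq_real _ _
  rw [expand, hinner]
  nlinarith [norm_nonneg (∫ r in u..u', b r)]

lemma norm_anti (w b : ℝ → F)
    (hbint : ∀ u u' : ℝ, IntervalIntegrable b volume u u')
    (hw : ∀ u u' : ℝ, w u' - w u = -∫ r in u..u', b r)
    (hpos : ∀ r : ℝ, 0 ≤ (inner ℝ (w r) (b r) : ℝ)) :
    ∀ s t : ℝ, s ≤ t → ‖w t‖ ≤ ‖w s‖ := by
  intro s t hst
  set h : ℝ → ℝ := fun u => ∫ r in (0:ℝ)..u, ‖b r‖ with hh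
  have hnint : ∀ c e : ℝ, IntervalIntegrable (fun r => ‖b r‖) volume c e :=
    fun c e => (hbint c e).norm
  have hcont : Continuous h := continuous_primitive hnint 0
  have hmono : ∀ u u' : ℝ, u ≤ u' → h u ≤ h u' := by
    intro u u' huu
    have : h u' - h u = ∫ r in u..u', ‖b r‖ := by
      rw [hh]; exact integral_interval_sub_left (hnint 0 u') (hnint 0 u)
    have h0 : 0 ≤ ∫ r in u..u', ‖b r‖ := integral_nonneg huu (fun _ _ => norm_nonneg _)
    linarith
  have hwcont : Continuous w := by
    have : Continuous fun u => ∫ r in (0:ℝ)..u, b r := continuous_primitive hbint 0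
    have heq : ∀ u, w u = w 0 - ∫ r in (0:ℝ)..u, b r := by
      intro u
      have := hw 0 u
      rw [sub_eq_iff_eq_add] at this
      rw [this]; abel
    rw [funext heq]
    exact continuous_const.sub this
  have main : ∀ ε : ℝ, 0 < ε → ‖w t‖ ^ 2 ≤ ‖w s‖ ^ 2 + 3 * ε * (h t - h s) := by
    intro ε hε
    set S : Set ℝ := {u | ‖w u‖ ^ 2 ≤ ‖w s‖ ^ 2 + 3 * ε * (h u - h s)} with hS
    have hSclosed : IsClosed S := by
      apply isClosed_le
      · exact (hwcont.norm.pow 2)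
      · continuity
    have hsub : Set.Icc s t ⊆ S := by
      apply (hSclosed.inter isClosed_Icc).Icc_subset_of_forall_exists_gt
      · simp [hS]
      · rintro c ⟨hcS, hcs, hct⟩ y hy
        have hcont' : ContinuousAt h c := hcont.continuousAt
        have : ∀ᶠ u' in nhds c, |h u' - h c| < ε := by
          have := Metric.continuousAt_iff.mp hcont' ε hε
          obtain ⟨δ, hδ, hδ'⟩ := this
          filter_upwards [Metric.ball_mem_nhds c hδ] with u' hu'
          simpa [Real.dist_eq] using hδ' hu'
        obtain ⟨δ, hδpos, hδ⟩ := Metric.eventually_nhds_iff.mp this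
        refine ⟨min y (c + δ/2), ⟨?_, ?_, ?_⟩⟩
        · set u' := min y (c + δ/2) with hu'
          have hcu' : c ≤ u' := le_min (le_of_lt hy) (by linarith)
          have hclose : |h u' - h c| < ε := by
            apply hδ
            rw [Real.dist_eq]
            have : u' ≤ c + δ/2 := min_le_right _ _
            rw [abs_lt]; constructor <;> [linarith [hcu']; linarith]
          have hkey := key_step w b hbint hw hpos hcu'
          have hΔ0 : 0 ≤ h u' - h c := by have := hmono c u' hcu'; linarith
          have hΔε : h u' - h c ≤ ε := by rw [abs_lt] at hclose; linarith
          have : ‖w u'‖ ^ 2 ≤ ‖w c‖ ^ 2 + 3 * (h u' - h c) ^ 2 := hkey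
          have hc2 : ‖w c‖ ^ 2 ≤ ‖w s‖ ^ 2 + 3 * ε * (h c - h s) := hcS
          simp only [hS, Set.mem_setOf_eq]
          nlinarith
        · exact lt_min hy (by linarith)
        · exact min_le_left _ _
    exact hsub ⟨hst, le_refl t⟩
  have hts : 0 ≤ h t - h s := by have := hmono s t hst; linarith
  have hfinal : ‖w t‖ ^ 2 ≤ ‖w s‖ ^ 2 := by
    by_contra hcon
    push_neg at hcon
    have hden : (0:ℝ) < 3 * (h t - h s) + 1 := by linarith
    set ε := (‖w t‖ ^ 2 - ‖w s‖ ^ 2) / (3 * (h t - h s) + 1) with hε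
    have hεpos : 0 < ε := div_pos (by linarith) hden
    have hmain := main ε hεpos
    have hXD : ε * (3 * (h t - h s) + 1) = ‖w t‖ ^ 2 - ‖w s‖ ^ 2 :=
      div_mul_cancel₀ _ (ne_of_gt hden)
    nlinarith
  nlinarith [norm_nonneg (w t), norm_nonneg (w s)]

end Aux

section Alg

noncomputable def cent (N d : ℕ) :
    (Fin N → EuclideanSpace ℝ (Fin d)) →L[ℝ] (PiLp 2 fun _ : Fin N => EuclideanSpace ℝ (Fin d)) :=
  ⟨ { toFun := fun y => (WithLp.toLp 2 (fun i => y i - (N : ℝ)⁻¹ • ∑ j, y j) :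
        PiLp 2 fun _ : Fin N => EuclideanSpace ℝ (Fin d))
      map_add' := by
        intro y z
        ext i : 1
        simp [Finset.sum_add_distrib, smul_add]
        abel
      map_smul' := by
        intro c y
        ext i : 1
        show c • y i - (N:ℝ)⁻¹ • ∑ j, c • y j = c • (y i - (N:ℝ)⁻¹ • ∑ j, y j)
        rw [← Finset.smul_sum, smul_sub, smul_comm] },
    (PiLp.continuous_toLp 2 _).comp (by fun_prop)⟩

variable {N d : ℕ}

lemma cent_apply (y : Fin N → EuclideanSpace ℝ (Fin d)) (i : Fin N) :
    cent N d y i = y i - (N : ℝ)⁻¹ • ∑ j, y j := rfl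

lemma bvar_eq (hN : 0 < N) (y : Fin N → EuclideanSpace ℝ (Fin d)) :
    Bvar y y = (N : ℝ)⁻¹ * ‖cent N d y‖ ^ 2 := by
  have hNR : (0:ℝ) < (N:ℝ) := by exact_mod_cast hN
  have hnorm : ‖cent N d y‖ ^ 2 = ∑ i, ‖cent N d y i‖ ^ 2 := by
    rw [PiLp.norm_sq_eq_of_L2]
  rw [Bvar, hnorm]
  set m : EuclideanSpace ℝ (Fin d) := (N : ℝ)⁻¹ • ∑ j, y j with hm
  have hsum : ∑ i, y i = (N:ℝ) • m := by
    rw [hm, smul_smul, mul_inv_cancel₀ (ne_of_gt hNR), one_smul]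
  have expand : ∀ i, ‖cent N d y i‖ ^ 2 =
      ‖y i‖ ^ 2 - 2 * (inner ℝ (y i) m : ℝ) + ‖m‖ ^ 2 := by
    intro i; rw [cent_apply, ← hm]; exact norm_sub_sq_real _ _
  rw [Finset.sum_congr rfl (fun i _ => expand i)]
  rw [Finset.sum_add_distrib, Finset.sum_sub_distrib]
  have h1 : ∑ i, (inner ℝ (y i) (y i) : ℝ) = ∑ i, ‖y i‖ ^ 2 := by
    exact Finset.sum_congr rfl fun i _ => real_inner_self_eq_norm_sq _
  have h2 : ∑ i : Fin N, 2 * (inner ℝ (y i) m : ℝ) = 2 * ((N:ℝ) * ‖m‖ ^ 2) := by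
    rw [← Finset.mul_sum, ← sum_inner, hsum, real_inner_smul_left,
      real_inner_self_eq_norm_sq]
  have h3 : ∑ _i : Fin N, ‖m‖ ^ 2 = (N:ℝ) * ‖m‖ ^ 2 := by
    simp [Finset.sum_const, Finset.card_univ, nsmul_eq_mul]
  have h4 : (inner ℝ m m : ℝ) = ‖m‖ ^ 2 := real_inner_self_eq_norm_sq m
  rw [h1, h2, h3, h4]
  field_simp
  ring

lemma lap_sum_zero (c : Fin N → Fin N → ℝ) (hsymm : ∀ i j, c i j = c j i)
    (y : Fin N → EuclideanSpace ℝ (Fin d)) : ∑ i, lap c y i = 0 := by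
  have key : ∑ i : Fin N, ∑ j : Fin N, c i j • (y i - y j) = 0 := by
    set T := ∑ i : Fin N, ∑ j : Fin N, c i j • (y i - y j) with hT
    have h1 : T = -T := by
      calc T = ∑ j : Fin N, ∑ i : Fin N, c i j • (y i - y j) := Finset.sum_comm
        _ = ∑ j : Fin N, ∑ i : Fin N, c j i • (y i - y j) :=
            Finset.sum_congr rfl fun j _ => Finset.sum_congr rfl fun i _ => by
              rw [hsymm i j]
        _ = ∑ j : Fin N, ∑ i : Fin N, -(c j i • (y j - y i)) :=
            Finset.sum_congr rfl fun j _ => Finset.sum_congr rfl fun i _ => by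
              rw [← smul_neg, neg_sub]
        _ = -T := by rw [hT]; simp
    have h2 : (2:ℝ) • T = 0 := by
      rw [two_smul]; nth_rewrite 2 [h1]; simp
    rcases smul_eq_zero.mp h2 with h | h
    · norm_num at h
    · exact h
  unfold lap
  rw [← Finset.smul_sum, key, smul_zero]

lemma inner_sum_lap_nonneg (c : Fin N → Fin N → ℝ) (hsymm : ∀ i j, c i j = c j i)
    (hnn : ∀ i j, 0 ≤ c i j) (y : Fin N → EuclideanSpace ℝ (Fin d)) :
    0 ≤ ∑ i, (inner ℝ (y i) (lap c y i) : ℝ) := by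
  have hS : ∑ i, (inner ℝ (y i) (lap c y i) : ℝ) =
      (N:ℝ)⁻¹ * ∑ i, ∑ j, c i j * (inner ℝ (y i) (y i - y j) : ℝ) := by
    rw [Finset.mul_sum]
    refine Finset.sum_congr rfl fun i _ => ?_
    simp only [lap]
    rw [real_inner_smul_right, inner_sum]
    simp_rw [real_inner_smul_right]
  rw [hS]
  have h1 : (∑ i : Fin N, ∑ j : Fin N, c i j * (inner ℝ (y i) (y i - y j) : ℝ)) =
      ∑ i : Fin N, ∑ j : Fin N, c i j * -(inner ℝ (y j) (y i - y j) : ℝ) := by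
    calc (∑ i : Fin N, ∑ j : Fin N, c i j * (inner ℝ (y i) (y i - y j) : ℝ))
        = ∑ j : Fin N, ∑ i : Fin N, c i j * (inner ℝ (y i) (y i - y j) : ℝ) :=
          Finset.sum_comm
      _ = ∑ j : Fin N, ∑ i : Fin N, c j i * (inner ℝ (y i) (y i - y j) : ℝ) :=
          Finset.sum_congr rfl fun j _ => Finset.sum_congr rfl fun i _ => by
            rw [hsymm i j]
      _ = ∑ i : Fin N, ∑ j : Fin N, c i j * (inner ℝ (y j) (y j - y i) : ℝ) := rfl
      _ = ∑ i : Fin N, ∑ j : Fin N, c i j * -(inner ℝ (y j) (y i - y j) : ℝ) :=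
          Finset.sum_congr rfl fun i _ => Finset.sum_congr rfl fun j _ => by
            rw [← inner_neg_right, neg_sub]
  have htwo : (∑ i : Fin N, ∑ j : Fin N, c i j * (inner ℝ (y i) (y i - y j) : ℝ)) +
      (∑ i : Fin N, ∑ j : Fin N, c i j * (inner ℝ (y i) (y i - y j) : ℝ)) =
      ∑ i : Fin N, ∑ j : Fin N, c i j * ‖y i - y j‖ ^ 2 := by
    nth_rewrite 2 [h1]
    rw [← Finset.sum_add_distrib]
    refine Finset.sum_congr rfl fun i _ => ?_
    rw [← Finset.sum_add_distrib]
    refine Finset.sum_congr rfl fun j _ => ?_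
    have hn : ‖y i - y j‖ ^ 2 =
        (inner ℝ (y i) (y i - y j) : ℝ) - (inner ℝ (y j) (y i - y j) : ℝ) := by
      rw [← real_inner_self_eq_norm_sq, inner_sub_left]
    rw [hn]; ring
  have hpos : 0 ≤ ∑ i : Fin N, ∑ j : Fin N, c i j * ‖y i - y j‖ ^ 2 :=
    Finset.sum_nonneg fun i _ => Finset.sum_nonneg fun j _ =>
      mul_nonneg (hnn i j) (sq_nonneg _)
  have : 0 ≤ ∑ i : Fin N, ∑ j : Fin N, c i j * (inner ℝ (y i) (y i - y j) : ℝ) := by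
    linarith
  positivity

lemma inner_cent_eq (y a : Fin N → EuclideanSpace ℝ (Fin d))
    (hsum0 : ∑ i, a i = 0) :
    (inner ℝ (cent N d y) (cent N d a) : ℝ) = ∑ i, (inner ℝ (y i) (a i) : ℝ) := by
  have hca : ∀ i, cent N d a i = a i := by
    intro i; rw [cent_apply, hsum0, smul_zero, sub_zero]
  rw [PiLp.inner_apply]
  have : ∀ i, (inner ℝ (cent N d y i) (cent N d a i) : ℝ) =
      (inner ℝ (y i) (a i) : ℝ) - (inner ℝ ((N:ℝ)⁻¹ • ∑ j, y j) (a i) : ℝ) := by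
    intro i
    rw [hca, cent_apply, inner_sub_left]
  rw [Finset.sum_congr rfl fun i _ => this i, Finset.sum_sub_distrib]
  have : ∑ i, (inner ℝ ((N:ℝ)⁻¹ • ∑ j, y j) (a i) : ℝ) =
      (inner ℝ ((N:ℝ)⁻¹ • ∑ j, y j) (∑ i, a i) : ℝ) := (inner_sum _ _ _).symm
  rw [this, hsum0, inner_zero_right, sub_zero]

end Alg

theorem stmt10 (N d : ℕ) (hN : 1 ≤ N)
    (ξ : ℝ → Fin N → Fin N → ℝ)
    (hξsymm : ∀ t i j, ξ t i j = ξ t j i)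
    (hξrange : ∀ t i j, ξ t i j ∈ Set.Icc (0 : ℝ) 1)
    (ϕ : ℝ → ℝ) (hϕ : LipschitzWith 1 ϕ) (hϕpos : ∀ r, 0 ≤ r → 0 < ϕ r)
    (x v : ℝ → Fin N → EuclideanSpace ℝ (Fin d))
    (hvint : ∀ t : ℝ, IntervalIntegrable v MeasureTheory.volume 0 t)
    (haint : ∀ t : ℝ, IntervalIntegrable
      (fun s => lap (fun i j => ξ s i j * ϕ ‖x s i - x s j‖) (v s))
      MeasureTheory.volume 0 t)
    -- absolutely continuous (Carathéodory) solution of ẋ = v, v̇ = -L(t,x)v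
    (hx : ∀ t : ℝ, x t = x 0 + ∫ s in (0:ℝ)..t, v s)
    (hv : ∀ t : ℝ, v t = v 0 -
      ∫ s in (0:ℝ)..t, lap (fun i j => ξ s i j * ϕ ‖x s i - x s j‖) (v s)) :
    ∀ s t : ℝ, 0 ≤ s → s ≤ t →
      Real.sqrt (Bvar (v t) (v t)) ≤ Real.sqrt (Bvar (v s) (v s)) ∧
      Real.sqrt (Bvar (x t) (x t)) ≤
        Real.sqrt (Bvar (x s) (x s)) + (t - s) * Real.sqrt (Bvar (v s) (v s)) := by
  have hN0 : 0 < N := hN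
  set a : ℝ → Fin N → EuclideanSpace ℝ (Fin d) :=
    fun s => lap (fun i j => ξ s i j * ϕ ‖x s i - x s j‖) (v s) with ha
  have haint' : ∀ u u' : ℝ, IntervalIntegrable a MeasureTheory.volume u u' :=
    fun u u' => ((haint u).symm.trans (haint u'))
  have hvint' : ∀ u u' : ℝ, IntervalIntegrable v MeasureTheory.volume u u' :=
    fun u u' => ((hvint u).symm.trans (hvint u'))
  set W : ℝ → PiLp 2 fun _ : Fin N => EuclideanSpace ℝ (Fin d) :=
    fun t => cent N d (v t) with hW
  set bb : ℝ → PiLp 2 fun _ : Fin N => EuclideanSpace ℝ (Fin d) :=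
    fun t => cent N d (a t) with hbb
  have hbbint : ∀ u u' : ℝ, IntervalIntegrable bb MeasureTheory.volume u u' :=
    fun u u' => IntervalIntegrable.clm_comp' (cent N d) (haint' u u')
  have hvdiff : ∀ u u' : ℝ, v u' - v u = -∫ r in u..u', a r := by
    intro u u'
    rw [hv u', hv u]
    have := intervalIntegral.integral_interval_sub_left (haint u') (haint u)
    rw [← this]
    abel
  have hwdiff : ∀ u u' : ℝ, W u' - W u = -∫ r in u..u', bb r := by
    intro u u'
    rw [hW]
    show cent N d (v u') - cent N d (v u) = _
    rw [← (cent N d).map_sub, hvdiff u u', (cent N d).map_neg,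
      (cent N d).intervalIntegral_comp_comm (haint' u u')]
  have hcsymm : ∀ r : ℝ, ∀ i j, (ξ r i j * ϕ ‖x r i - x r j‖) =
      (ξ r j i * ϕ ‖x r j - x r i‖) := by
    intro r i j
    rw [hξsymm r i j, norm_sub_rev]
  have hcnn : ∀ r : ℝ, ∀ i j, 0 ≤ ξ r i j * ϕ ‖x r i - x r j‖ := by
    intro r i j
    exact mul_nonneg (hξrange r i j).1 (hϕpos _ (norm_nonneg _)).le
  have hpos : ∀ r : ℝ, 0 ≤ (inner ℝ (W r) (bb r) : ℝ) := by
    intro r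
    rw [hW, hbb]
    show 0 ≤ (inner ℝ (cent N d (v r)) (cent N d (a r)) : ℝ)
    rw [inner_cent_eq (v r) (a r) (lap_sum_zero _ (hcsymm r) (v r))]
    exact inner_sum_lap_nonneg _ (hcsymm r) (hcnn r) (v r)
  have hanti : ∀ s t : ℝ, s ≤ t → ‖W t‖ ≤ ‖W s‖ :=
    norm_anti W bb hbbint hwdiff hpos
  -- sqrt formula
  have hsqrt : ∀ y : Fin N → EuclideanSpace ℝ (Fin d),
      Real.sqrt (Bvar y y) = Real.sqrt (N:ℝ)⁻¹ * ‖cent N d y‖ := by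
    intro y
    rw [bvar_eq hN0 y, Real.sqrt_mul (by positivity), Real.sqrt_sq (norm_nonneg _)]
  intro s t hs hst
  have hsqnn : (0:ℝ) ≤ Real.sqrt (N:ℝ)⁻¹ := Real.sqrt_nonneg _
  constructor
  · rw [hsqrt, hsqrt]
    exact mul_le_mul_of_nonneg_left (hanti s t hst) hsqnn
  · rw [hsqrt, hsqrt, hsqrt]
    have hxdiff : cent N d (x t) - cent N d (x s) = ∫ r in s..t, cent N d (v r) := by
      have h1 : x t - x s = ∫ r in s..t, v r := by
        rw [hx t, hx s]
        have := intervalIntegral.integral_interval_sub_left (hvint t) (hvint s)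
        rw [← this]
        abel
      rw [← (cent N d).map_sub, h1, (cent N d).intervalIntegral_comp_comm (hvint' s t)]
    have hWint : IntervalIntegrable (fun r => cent N d (v r)) MeasureTheory.volume s t :=
      IntervalIntegrable.clm_comp' (cent N d) (hvint' s t)
    have hbound : ‖∫ r in s..t, cent N d (v r)‖ ≤ (t - s) * ‖W s‖ := by
      calc ‖∫ r in s..t, cent N d (v r)‖ ≤ ∫ r in s..t, ‖cent N d (v r)‖ :=
            intervalIntegral.norm_integral_le_integral_norm hst
        _ ≤ ∫ r in s..t, ‖W s‖ := by
            apply intervalIntegral.integral_mono_on hst hWint.norm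
              intervalIntegrable_const
            intro r hr
            exact hanti s r hr.1
        _ = (t - s) * ‖W s‖ := by
            rw [intervalIntegral.integral_const, smul_eq_mul]
    have htri : ‖cent N d (x t)‖ ≤ ‖cent N d (x s)‖ + (t - s) * ‖W s‖ := by
      calc ‖cent N d (x t)‖ = ‖cent N d (x s) + (cent N d (x t) - cent N d (x s))‖ := by
            congr 1; abel
        _ ≤ ‖cent N d (x s)‖ + ‖cent N d (x t) - cent N d (x s)‖ := norm_add_le _ _
        _ ≤ _ := by rw [hxdiff]; exact add_le_add_right hbound _
    calc Real.sqrt (N:ℝ)⁻¹ * ‖cent N d (x t)‖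
        ≤ Real.sqrt (N:ℝ)⁻¹ * (‖cent N d (x s)‖ + (t - s) * ‖W s‖) :=
          mul_le_mul_of_nonneg_left htri hsqnn
      _ = Real.sqrt (N:ℝ)⁻¹ * ‖cent N d (x s)‖ +
          (t - s) * (Real.sqrt (N:ℝ)⁻¹ * ‖cent N d (v s)‖) := by rw [hW]; ring
end

section
/- Suppose piecewise-constant weights ξ_{ij}(·) are constant on each interval [mτ/n, (m+1)τ/n), and for every m ≥ 0 the averaged weights ξ̄^m_{ij} := (1/n)Σ_{k=0}^{n−1} ξ_{ij}((m+k)τ/n) define a graph whose Laplacian satisfies B(L_{ξ̄^m} v, v) ≥ μ B(v,v) for all v. Then for every t ≥ 0, B((1/τ)∫_t^{t+τ} L_ξ(s) ds · v, v) ≥ (μ/2) B(v,v) for all v ∈ (ℝ^d)^N; that is, the persistence condition holds with constant μ/2. -/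
open Finset MeasureTheory
open Finset

lemma Bvar_add_left {N d : ℕ} (x y z : Fin N → EuclideanSpace ℝ (Fin d)) :
    Bvar (x + y) z = Bvar x z + Bvar y z := by
  simp only [Bvar, Pi.add_apply, inner_add_left, Finset.sum_add_distrib, smul_add]
  ring

lemma Bvar_smul_left {N d : ℕ} (r : ℝ) (x z : Fin N → EuclideanSpace ℝ (Fin d)) :
    Bvar (r • x) z = r * Bvar x z := by
  simp only [Bvar, Pi.smul_apply, real_inner_smul_left, ← Finset.smul_sum, smul_comm (N:ℝ)⁻¹ r,
    ← Finset.mul_sum]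
  ring

lemma Bvar_zero_left {N d : ℕ} (z : Fin N → EuclideanSpace ℝ (Fin d)) :
    Bvar (0 : Fin N → EuclideanSpace ℝ (Fin d)) z = 0 := by
  simp [Bvar]

lemma Bvar_sum_left {N d : ℕ} {ι : Type*} (s : Finset ι)
    (x : ι → Fin N → EuclideanSpace ℝ (Fin d)) (z : Fin N → EuclideanSpace ℝ (Fin d)) :
    Bvar (∑ k ∈ s, x k) z = ∑ k ∈ s, Bvar (x k) z := by
  induction s using Finset.cons_induction with
  | empty => simp [Bvar_zero_left]
  | cons a s ha ih => rw [Finset.sum_cons, Finset.sum_cons, Bvar_add_left, ih]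

lemma sum_lap_eq_zero {N d : ℕ} (a : Fin N → Fin N → ℝ) (hsymm : ∀ i j, a i j = a j i)
    (v : Fin N → EuclideanSpace ℝ (Fin d)) : ∑ i, lap a v i = 0 := by
  have h2 : (∑ i, ∑ j, a i j • (v i - v j)) = -(∑ i, ∑ j, a i j • (v i - v j)) := by
    calc (∑ i, ∑ j, a i j • (v i - v j)) = ∑ j, ∑ i, a i j • (v i - v j) := Finset.sum_comm
      _ = ∑ i, ∑ j, -(a i j • (v i - v j)) := by
          refine Finset.sum_congr rfl fun i _ => Finset.sum_congr rfl fun j _ => ?_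
          rw [hsymm j i, ← smul_neg, neg_sub]
      _ = -(∑ i, ∑ j, a i j • (v i - v j)) := by simp
  have h3 : (2:ℝ) • (∑ i, ∑ j, a i j • (v i - v j)) = 0 := by
    rw [two_smul]
    nth_rewrite 2 [h2]
    exact add_neg_cancel _
  have h : (∑ i, ∑ j, a i j • (v i - v j)) = 0 := by
    rcases smul_eq_zero.mp h3 with h | h
    · norm_num at h
    · exact h
  simp only [lap, ← Finset.smul_sum, h, smul_zero]

lemma Bvar_lap_eq {N d : ℕ} (hN : 1 ≤ N) (a : Fin N → Fin N → ℝ) (hsymm : ∀ i j, a i j = a j i)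
    (v : Fin N → EuclideanSpace ℝ (Fin d)) :
    Bvar (lap a v) v = (2 * (N:ℝ)^2)⁻¹ * ∑ i, ∑ j, a i j * ‖v i - v j‖^2 := by
  have hz := sum_lap_eq_zero a hsymm v
  have key : (2:ℝ) * ∑ i, ∑ j, a i j * (inner ℝ (v i - v j) (v i) : ℝ)
      = ∑ i, ∑ j, a i j * ‖v i - v j‖^2 := by
    have hswap : (∑ i, ∑ j, a i j * (inner ℝ (v i - v j) (v i) : ℝ))
        = ∑ i, ∑ j, a i j * (-(inner ℝ (v i - v j) (v j) : ℝ)) := by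
      calc (∑ i, ∑ j, a i j * (inner ℝ (v i - v j) (v i) : ℝ))
          = ∑ j, ∑ i, a i j * (inner ℝ (v i - v j) (v i) : ℝ) := Finset.sum_comm
        _ = ∑ i, ∑ j, a i j * (-(inner ℝ (v i - v j) (v j) : ℝ)) := by
            refine Finset.sum_congr rfl fun i _ => Finset.sum_congr rfl fun j _ => ?_
            rw [hsymm j i]
            congr 1
            rw [← inner_neg_left, neg_sub]
    rw [two_mul]
    nth_rewrite 2 [hswap]
    rw [← Finset.sum_add_distrib]
    refine Finset.sum_congr rfl fun i _ => ?_
    rw [← Finset.sum_add_distrib]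
    refine Finset.sum_congr rfl fun j _ => ?_
    rw [← mul_add, ← sub_eq_add_neg, ← inner_sub_right, real_inner_self_eq_norm_sq]
  have h1 : ∀ i, (inner ℝ (lap a v i) (v i) : ℝ)
      = (N:ℝ)⁻¹ * ∑ j, a i j * (inner ℝ (v i - v j) (v i) : ℝ) := by
    intro i
    simp only [lap]
    rw [real_inner_smul_left, sum_inner]
    congr 1
    exact Finset.sum_congr rfl fun j _ => real_inner_smul_left _ _ _
  have hN' : (N:ℝ) ≠ 0 := Nat.cast_ne_zero.mpr (by omega)
  rw [Bvar, hz]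
  simp only [smul_zero, inner_zero_left, sub_zero]
  simp only [h1, ← Finset.mul_sum]
  rw [← key]
  field_simp

open MeasureTheory in
lemma piece_integral {N d : ℕ} (n : ℕ) (τ : ℝ)
    (ξ : ℝ → Fin N → Fin N → ℝ)
    (hpc : ∀ m : ℕ, ∀ s ∈ Set.Ico ((m : ℝ) * τ / n) (((m : ℝ) + 1) * τ / n),
      ξ s = ξ ((m : ℝ) * τ / n))
    (v : Fin N → EuclideanSpace ℝ (Fin d)) (M : ℕ) (a b : ℝ)
    (h1 : (M:ℝ) * τ / n ≤ a) (h2 : a ≤ b) (h3 : b ≤ ((M:ℝ) + 1) * τ / n) :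
    IntervalIntegrable (fun s => lap (ξ s) v) volume a b ∧
    ∫ s in a..b, lap (ξ s) v = (b - a) • lap (ξ ((M:ℝ) * τ / n)) v := by
  have hne : ∀ᵐ s : ℝ, s ∉ ({b} : Set ℝ) := (Set.countable_singleton b).ae_notMem _
  have hkey : ∀ᵐ s : ℝ, s ∈ Set.uIoc a b → (fun s => lap (ξ s) v) s = lap (ξ ((M:ℝ) * τ / n)) v := by
    filter_upwards [hne] with s hsb hs
    rw [Set.uIoc_of_le h2] at hs
    have hslt : s < b := lt_of_le_of_ne hs.2 (by simpa using hsb)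
    rw [hpc M s ⟨h1.trans hs.1.le, lt_of_lt_of_le hslt h3⟩]
  constructor
  · refine (intervalIntegrable_const (c := lap (ξ ((M:ℝ) * τ / n)) v)).congr_ae ?_
    have := ae_restrict_of_ae (μ := volume) (s := Set.uIoc a b) hkey
    filter_upwards [this, ae_restrict_mem measurableSet_uIoc] with s h hmem
    exact (h hmem).symm
  · rw [intervalIntegral.integral_congr_ae hkey, intervalIntegral.integral_const]

theorem stmt19 (N d : ℕ) (hN : 1 ≤ N) (n : ℕ) (hn : 1 ≤ n) (τ μ : ℝ)
    (hτ : 0 < τ) (hμ : 0 < μ)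
    (ξ : ℝ → Fin N → Fin N → ℝ)
    (hξsymm : ∀ t i j, ξ t i j = ξ t j i)
    (hξrange : ∀ t i j, ξ t i j ∈ Set.Icc (0 : ℝ) 1)
    -- ξ is constant on each interval [mτ/n, (m+1)τ/n)
    (hpc : ∀ m : ℕ, ∀ s ∈ Set.Ico ((m : ℝ) * τ / n) (((m : ℝ) + 1) * τ / n),
      ξ s = ξ ((m : ℝ) * τ / n))
    -- each averaged graph over n consecutive intervals has B-connectivity ≥ μ
    (havg : ∀ m : ℕ, ∀ v : Fin N → EuclideanSpace ℝ (Fin d),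
      μ * Bvar v v ≤
        Bvar (lap (fun i j => (n : ℝ)⁻¹ * ∑ k ∈ Finset.range n,
          ξ (((m + k : ℕ) : ℝ) * τ / n) i j) v) v) :
    ∀ t : ℝ, 0 ≤ t → ∀ v : Fin N → EuclideanSpace ℝ (Fin d),
      (μ / 2) * Bvar v v ≤
        Bvar (τ⁻¹ • ∫ s in t..(t + τ), lap (ξ s) v) v := by
  intro t ht v
  have hn0 : (0:ℝ) < n := by exact_mod_cast hn
  -- locate t in its piece
  obtain ⟨m, hm1, hm2⟩ : ∃ m : ℕ, (m:ℝ) * τ / n ≤ t ∧ t < ((m:ℝ)+1) * τ / n := by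
    set r := t * n / τ with hr
    have h0 : (0:ℝ) ≤ r := by positivity
    have hfl : (⌊r⌋ : ℝ) ≤ r := Int.floor_le r
    have hfl2 : r < ⌊r⌋ + 1 := Int.lt_floor_add_one r
    have hcast : ((⌊r⌋.toNat : ℕ) : ℝ) = (⌊r⌋ : ℝ) := by
      exact_mod_cast congrArg (Int.cast : ℤ → ℝ) (Int.toNat_of_nonneg (Int.floor_nonneg.mpr h0))
    have hrτ : r * τ = t * n := by rw [hr, div_mul_cancel₀ _ hτ.ne']
    refine ⟨⌊r⌋.toNat, ?_, ?_⟩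
    · rw [div_le_iff₀ hn0]
      have h' : ((⌊r⌋.toNat : ℕ):ℝ) * τ ≤ r * τ :=
        mul_le_mul_of_nonneg_right (hcast ▸ hfl) hτ.le
      linarith
    · rw [lt_div_iff₀ hn0]
      have h' : r * τ < (((⌊r⌋.toNat : ℕ):ℝ) + 1) * τ :=
        mul_lt_mul_of_pos_right (by rw [hcast]; exact hfl2) hτ
      linarith
  -- the partition
  set P : ℕ → ℝ := fun k => if k = 0 then t else if k ≤ n then ((m + k : ℕ) : ℝ) * τ / n else t + τ
    with hP
  have hP0 : P 0 = t := by simp [hP]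
  have hPmid : ∀ k : ℕ, 1 ≤ k → k ≤ n → P k = ((m + k : ℕ) : ℝ) * τ / n := by
    intro k h1 h2
    simp only [hP]
    rw [if_neg (by omega : ¬ k = 0), if_pos h2]
  have hPtop : P (n+1) = t + τ := by
    simp only [hP]
    rw [if_neg (by omega : ¬ n+1 = 0), if_neg (by omega : ¬ n+1 ≤ n)]
  have hstep : ∀ a b : ℕ, a ≤ b → ((a:ℝ)) * τ / n ≤ (b:ℝ) * τ / n := by
    intro a b hab
    rw [div_le_div_iff₀ hn0 hn0]
    have h : (a:ℝ) ≤ b := by exact_mod_cast hab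
    nlinarith [mul_le_mul_of_nonneg_right (mul_le_mul_of_nonneg_right h hτ.le) hn0.le]
  have hshift : ∀ a : ℕ, ((a + n : ℕ):ℝ) * τ / n = (a:ℝ) * τ / n + τ := by
    intro a
    push_cast
    field_simp
  have hmono : ∀ k : ℕ, k ≤ n → P k ≤ P (k+1) := by
    intro k hk
    rcases Nat.eq_zero_or_pos k with rfl | hk1
    · rw [hP0, hPmid 1 le_rfl hn]
      push_cast
      exact hm2.le
    · rcases eq_or_lt_of_le hk with heq | hk2
      · rw [hPmid k hk1 hk, heq, hPtop, hshift m]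
        linarith
      · rw [hPmid k hk1 hk, hPmid (k+1) (by omega) (by omega)]
        exact hstep _ _ (by omega)
  have hlow : ∀ k : ℕ, k ≤ n → ((m + k : ℕ) : ℝ) * τ / n ≤ P k := by
    intro k hk
    rcases Nat.eq_zero_or_pos k with rfl | hk1
    · rw [hP0]
      simpa using hm1
    · rw [hPmid k hk1 hk]
  have hhigh : ∀ k : ℕ, k ≤ n → P (k+1) ≤ (((m + k : ℕ) : ℝ) + 1) * τ / n := by
    intro k hk
    rcases eq_or_lt_of_le hk with heq | hk2
    · rw [heq, hPtop]
      have h2 : (((m + n : ℕ):ℝ) + 1) * τ / n = ((m:ℝ)+1) * τ / n + τ := by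
        push_cast
        field_simp
        ring
      rw [h2]
      linarith
    · rw [hPmid (k+1) (by omega) (by omega)]
      have h3 : ((m + (k+1) : ℕ):ℝ) = ((m + k : ℕ):ℝ) + 1 := by push_cast; ring
      rw [h3]
  have hpiece : ∀ k : ℕ, k ≤ n →
      IntervalIntegrable (fun s => lap (ξ s) v) volume (P k) (P (k+1)) ∧
      ∫ s in (P k)..(P (k+1)), lap (ξ s) v
        = (P (k+1) - P k) • lap (ξ (((m + k : ℕ):ℝ) * τ / n)) v :=
    fun k hk => piece_integral n τ ξ hpc v (m+k) (P k) (P (k+1)) (hlow k hk) (hmono k hk) (hhigh k hk)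
  have hsplit : ∫ s in t..(t+τ), lap (ξ s) v
      = ∑ k ∈ Finset.range (n+1), (P (k+1) - P k) • lap (ξ (((m + k : ℕ):ℝ) * τ / n)) v := by
    have hA := intervalIntegral.sum_integral_adjacent_intervals (μ := volume) (a := P)
      (f := fun s => lap (ξ s) v) (n := n+1) (fun k hk => (hpiece k (by omega)).1)
    rw [hP0, hPtop] at hA
    rw [← hA]
    exact Finset.sum_congr rfl fun k hk => (hpiece k (Nat.lt_succ_iff.mp (Finset.mem_range.mp hk))).2
  rw [hsplit, Bvar_smul_left, Bvar_sum_left]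
  simp only [Bvar_smul_left]
  set y : ℕ → ℝ := fun M => Bvar (lap (ξ ((M:ℝ) * τ / n)) v) v with hy
  have hyM : ∀ M : ℕ, Bvar (lap (ξ ((M:ℝ) * τ / n)) v) v = y M := fun _ => rfl
  simp only [hyM]
  have hy0 : ∀ M : ℕ, 0 ≤ y M := by
    intro M
    rw [← hyM, Bvar_lap_eq hN _ (fun i j => hξsymm _ i j) v]
    exact mul_nonneg (by positivity) (Finset.sum_nonneg fun i _ => Finset.sum_nonneg fun j _ =>
      mul_nonneg (hξrange _ i j).1 (by positivity))
  have hyavg : ∀ M : ℕ, (n:ℝ) * (μ * Bvar v v) ≤ ∑ k ∈ Finset.range n, y (M + k) := by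
    intro M
    have h := havg M v
    have hsym2 : ∀ i j : Fin N, (fun i j => (n:ℝ)⁻¹ * ∑ k ∈ Finset.range n,
        ξ (((M + k : ℕ):ℝ) * τ / n) i j) i j = (fun i j => (n:ℝ)⁻¹ * ∑ k ∈ Finset.range n,
        ξ (((M + k : ℕ):ℝ) * τ / n) i j) j i := by
      intro i j
      simp only []
      rw [Finset.sum_congr rfl fun k _ => hξsymm _ i j]
    rw [Bvar_lap_eq hN _ hsym2 v] at h
    set S' := ∑ k ∈ Finset.range n, ∑ i, ∑ j, ξ (((M + k : ℕ):ℝ) * τ / n) i j * ‖v i - v j‖^2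
      with hS'
    have hrw : (∑ i, ∑ j, ((n:ℝ)⁻¹ * ∑ k ∈ Finset.range n, ξ (((M + k : ℕ):ℝ) * τ / n) i j)
        * ‖v i - v j‖^2) = (n:ℝ)⁻¹ * S' := by
      rw [hS']
      calc (∑ i, ∑ j, ((n:ℝ)⁻¹ * ∑ k ∈ Finset.range n, ξ (((M + k : ℕ):ℝ) * τ / n) i j)
            * ‖v i - v j‖^2)
          = ∑ i, ∑ j, (n:ℝ)⁻¹ * ∑ k ∈ Finset.range n,
              ξ (((M + k : ℕ):ℝ) * τ / n) i j * ‖v i - v j‖^2 := by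
            refine Finset.sum_congr rfl fun i _ => Finset.sum_congr rfl fun j _ => ?_
            rw [mul_assoc, Finset.sum_mul]
        _ = (n:ℝ)⁻¹ * ∑ i, ∑ j, ∑ k ∈ Finset.range n,
              ξ (((M + k : ℕ):ℝ) * τ / n) i j * ‖v i - v j‖^2 := by
            rw [Finset.mul_sum]
            refine Finset.sum_congr rfl fun i _ => ?_
            rw [Finset.mul_sum]
        _ = (n:ℝ)⁻¹ * ∑ i, ∑ k ∈ Finset.range n, ∑ j,
              ξ (((M + k : ℕ):ℝ) * τ / n) i j * ‖v i - v j‖^2 := by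
            congr 1
            exact Finset.sum_congr rfl fun i _ => Finset.sum_comm
        _ = (n:ℝ)⁻¹ * ∑ k ∈ Finset.range n, ∑ i, ∑ j,
              ξ (((M + k : ℕ):ℝ) * τ / n) i j * ‖v i - v j‖^2 := by
            congr 1
            exact Finset.sum_comm
    rw [hrw] at h
    have hys : ∑ k ∈ Finset.range n, y (M + k) = (2*(N:ℝ)^2)⁻¹ * S' := by
      rw [hS', Finset.mul_sum]
      exact Finset.sum_congr rfl fun k _ => by
        rw [← hyM, Bvar_lap_eq hN _ (fun i j => hξsymm _ i j) v]
    have hne : (n:ℝ) ≠ 0 := hn0.ne'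
    have hid : (n:ℝ) * ((2*(N:ℝ)^2)⁻¹ * ((n:ℝ)⁻¹ * S')) = (2*(N:ℝ)^2)⁻¹ * S' := by
      field_simp
    rw [hys]
    have hmul := mul_le_mul_of_nonneg_left h hn0.le
    linarith
  -- piece lengths
  have hl0 : P 1 - P 0 = ((m:ℝ)+1) * τ / n - t := by
    rw [hP0, hPmid 1 le_rfl hn]
    push_cast
    ring
  have hlmid : ∀ k : ℕ, 1 ≤ k → k + 1 ≤ n → P (k+1) - P k = τ / n := by
    intro k h1 h2
    rw [hPmid k h1 (by omega), hPmid (k+1) (by omega) h2]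
    push_cast
    field_simp
    ring
  have hln : P (n+1) - P n = t - (m:ℝ) * τ / n := by
    rw [hPtop, hPmid n hn le_rfl, hshift m]
    ring
  have hαβ : (((m:ℝ)+1) * τ / n - t) + (t - (m:ℝ) * τ / n) = τ / n := by
    field_simp
    ring
  have hτ2n : 0 < τ / (2*(n:ℝ)) := by positivity
  have hhalf : τ/(2*(n:ℝ)) + τ/(2*(n:ℝ)) = τ / n := by
    field_simp
    ring
  have hmid2 : τ/(2*(n:ℝ)) ≤ τ/(n:ℝ) := by linarith [hhalf, hτ2n.le]
  have hlnonneg : ∀ k : ℕ, k ≤ n → 0 ≤ P (k+1) - P k := fun k hk => sub_nonneg.mpr (hmono k hk)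
  have hsum_bound : τ/(2*(n:ℝ)) * ((n:ℝ) * (μ * Bvar v v))
      ≤ ∑ k ∈ Finset.range (n+1), (P (k+1) - P k) * y (m+k) := by
    rcases le_or_gt (τ/(2*(n:ℝ))) (P 1 - P 0) with hα | hα
    · have hgood : ∀ k ∈ Finset.range n, τ/(2*(n:ℝ)) ≤ P (k+1) - P k := by
        intro k hk
        have hk' : k < n := Finset.mem_range.mp hk
        rcases Nat.eq_zero_or_pos k with rfl | hk1
        · exact hα
        · rw [hlmid k hk1 (by omega)]
          exact hmid2
      calc τ/(2*(n:ℝ)) * ((n:ℝ) * (μ * Bvar v v))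
          ≤ τ/(2*(n:ℝ)) * ∑ k ∈ Finset.range n, y (m+k) :=
            mul_le_mul_of_nonneg_left (hyavg m) hτ2n.le
        _ = ∑ k ∈ Finset.range n, τ/(2*(n:ℝ)) * y (m+k) := Finset.mul_sum _ _ _
        _ ≤ ∑ k ∈ Finset.range n, (P (k+1) - P k) * y (m+k) :=
            Finset.sum_le_sum fun k hk => mul_le_mul_of_nonneg_right (hgood k hk) (hy0 _)
        _ ≤ ∑ k ∈ Finset.range (n+1), (P (k+1) - P k) * y (m+k) := by
            refine Finset.sum_le_sum_of_subset_of_nonneg (Finset.range_subset_range.mpr (by omega)) ?_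
            intro k hk _
            exact mul_nonneg (hlnonneg k (Nat.lt_succ_iff.mp (Finset.mem_range.mp hk))) (hy0 _)
    · have hβ : τ/(2*(n:ℝ)) ≤ P (n+1) - P n := by
        rw [hln]
        rw [hl0] at hα
        linarith
      have hgood : ∀ k ∈ Finset.Ico 1 (n+1), τ/(2*(n:ℝ)) ≤ P (k+1) - P k := by
        intro k hk
        rw [Finset.mem_Ico] at hk
        rcases eq_or_lt_of_le (Nat.lt_succ_iff.mp hk.2) with heq | hk2
        · exact heq ▸ hβ
        · rw [hlmid k hk.1 (by omega)]
          exact hmid2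
      have hreindex : ∑ k ∈ Finset.Ico 1 (n+1), y (m+k) = ∑ k ∈ Finset.range n, y (m+1+k) := by
        rw [Finset.sum_Ico_eq_sum_range]
        simp only [Nat.add_sub_cancel]
        exact Finset.sum_congr rfl fun j _ => by rw [show m + (1+j) = m+1+j by omega]
      calc τ/(2*(n:ℝ)) * ((n:ℝ) * (μ * Bvar v v))
          ≤ τ/(2*(n:ℝ)) * ∑ k ∈ Finset.range n, y (m+1+k) :=
            mul_le_mul_of_nonneg_left (hyavg (m+1)) hτ2n.le
        _ = ∑ k ∈ Finset.Ico 1 (n+1), τ/(2*(n:ℝ)) * y (m+k) := by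
            rw [← hreindex, Finset.mul_sum]
        _ ≤ ∑ k ∈ Finset.Ico 1 (n+1), (P (k+1) - P k) * y (m+k) :=
            Finset.sum_le_sum fun k hk => mul_le_mul_of_nonneg_right (hgood k hk) (hy0 _)
        _ ≤ ∑ k ∈ Finset.range (n+1), (P (k+1) - P k) * y (m+k) := by
            refine Finset.sum_le_sum_of_subset_of_nonneg ?_ ?_
            · intro k hk
              rw [Finset.mem_Ico] at hk
              exact Finset.mem_range.mpr hk.2
            · intro k hk _
              exact mul_nonneg (hlnonneg k (Nat.lt_succ_iff.mp (Finset.mem_range.mp hk))) (hy0 _)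
  have hid2 : τ/(2*(n:ℝ)) * ((n:ℝ) * (μ * Bvar v v)) = τ * (μ/2 * Bvar v v) := by
    field_simp
  rw [hid2] at hsum_bound
  have hfin := mul_le_mul_of_nonneg_left hsum_bound (inv_nonneg.mpr hτ.le)
  rw [← mul_assoc, inv_mul_cancel₀ hτ.ne', one_mul] at hfin
  exact hfin
end
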